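/- If (Q(t), P(t)) is a solution of the symmetric rigid body equations Q̇ = QU, Ṗ = PU with U = J⁻¹(QᵀP − PᵀQ), and M := QᵀP − PᵀQ, Ω := U, then M satisfies the Euler rigid body equation Ṁ = [M, Ω] = MΩ − ΩM. -/

import Mathlib

open Matrix

attribute [local instance] Matrix.normedAddCommGroup Matrix.normedSpace

section Aux

variable {n : ℕ}

local notation "M" => Matrix (Fin n) (Fin n) ℝ

noncomputable def mulCLM (n : ℕ) :
    Matrix (Fin n) (Fin n) ℝ →L[ℝ] Matrix (Fin n) (Fin n) ℝ →L[ℝ] Matrix (Fin n) (Fin n) ℝ :=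
  LinearMap.toContinuousLinearMap
    { toFun := fun A => LinearMap.toContinuousLinearMap (LinearMap.mulLeft ℝ A)
      map_add' := by
        intro A B
        apply ContinuousLinearMap.ext
        intro C
        simp [add_mul]
      map_smul' := by
        intro c A
        apply ContinuousLinearMap.ext
        intro C
        simp [smul_mul_assoc] }

@[simp] lemma mulCLM_apply (A B : M) : mulCLM n A B = A * B := rfl

noncomputable def transposeCLM (n : ℕ) :
    Matrix (Fin n) (Fin n) ℝ →L[ℝ] Matrix (Fin n) (Fin n) ℝ :=
  LinearMap.toContinuousLinearMap
    { toFun := fun A => Aᵀ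
      map_add' := fun A B => Matrix.transpose_add A B
      map_smul' := fun c A => Matrix.transpose_smul c A }

@[simp] lemma transposeCLM_apply (A : M) : transposeCLM n A = Aᵀ := rfl

lemma hasDerivAt_mul {f g : ℝ → M} {f' g' : M} {t : ℝ}
    (hf : HasDerivAt f f' t) (hg : HasDerivAt g g' t) :
    HasDerivAt (fun s => f s * g s) (f' * g t + f t * g') t := by
  have h1 : HasDerivAt (fun s => mulCLM n (f s)) (mulCLM n f') t :=
    @HasFDerivAt.comp_hasDerivAt ℝ _ M _ _ (M →L[ℝ] M) ContinuousLinearMap.toNormedAddCommGroup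
      ContinuousLinearMap.toNormedSpace f f' t (mulCLM n) (mulCLM n) (mulCLM n).hasFDerivAt hf
  exact h1.clm_apply hg

lemma hasDerivAt_transpose {f : ℝ → M} {f' : M} {t : ℝ} (hf : HasDerivAt f f' t) :
    HasDerivAt (fun s => (f s)ᵀ) f'ᵀ t := by
  exact (transposeCLM n).hasFDerivAt.comp_hasDerivAt (x := t) hf

end Aux

/-- If `(Q, P)` solves the symmetric rigid body equations `Q̇ = QU`, `Ṗ = PU`, where
`U = J⁻¹(QᵀP − PᵀQ)` (expressed by `J(U) = ΛU + UΛ = QᵀP − PᵀQ`, `U` skew), then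
`M := QᵀP − PᵀQ` satisfies the Euler rigid body equation `Ṁ = MΩ − ΩM` with `Ω = U`. -/
theorem symmetric_rigid_body_to_euler {n : ℕ}
    (Λ : Matrix (Fin n) (Fin n) ℝ)
    (Q P U : ℝ → Matrix (Fin n) (Fin n) ℝ)
    (hUskew : ∀ t, (U t)ᵀ = -(U t))
    (hJ : ∀ t, Λ * U t + U t * Λ = (Q t)ᵀ * P t - (P t)ᵀ * Q t)
    (hQ : ∀ t, HasDerivAt Q (Q t * U t) t)
    (hP : ∀ t, HasDerivAt P (P t * U t) t) :
    ∀ t, HasDerivAt (fun s => (Q s)ᵀ * P s - (P s)ᵀ * Q s)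
      (((Q t)ᵀ * P t - (P t)ᵀ * Q t) * U t - U t * ((Q t)ᵀ * P t - (P t)ᵀ * Q t)) t := by
  intro t
  have h1 : HasDerivAt (fun s => (Q s)ᵀ * P s)
      ((Q t * U t)ᵀ * P t + (Q t)ᵀ * (P t * U t)) t :=
    hasDerivAt_mul (hasDerivAt_transpose (hQ t)) (hP t)
  have h2 : HasDerivAt (fun s => (P s)ᵀ * Q s)
      ((P t * U t)ᵀ * Q t + (P t)ᵀ * (Q t * U t)) t :=
    hasDerivAt_mul (hasDerivAt_transpose (hP t)) (hQ t)
  have h : HasDerivAt (fun s => (Q s)ᵀ * P s - (P s)ᵀ * Q s) _ t := h1.sub h2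
  convert h using 1
  simp only [Matrix.transpose_mul, hUskew]
  noncomm_ring
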